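/- Let F be 0-strongly regular on [0,U) with c = 0, and let q_l*(γ) be the optimal lower price under the γ-ratio constraint. Given that q_l*(γ) ≤ q_l*(1) (where q_l*(1) is the uniform monopoly price with w(q_l*(1)) = 0), one has (q_l*)² f'(q_l*) + 2 q_l* f(q_l*) ≥ (2 q_l* f²(q_l*)/S(q_l*))·(S(q_l*)/f(q_l*) − q_l*) ≥ 0, and hence the optimal upper price q_u*(γ) is non-decreasing in γ. -/

import Mathlib

open Set Filter

/-- Let `F` be 0-strongly regular on `[0, U)` with `c = 0`, and `q_l*(γ)`
the optimal lower price under the `γ`-ratio constraint. Given that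
`q_l*(γ) ≤ q_l*(1)` where `q_l*(1)` is the uniform monopoly price (with
`w(q_l*(1)) = 0`, i.e. `S(q_l*(1)) = q_l*(1)·f(q_l*(1))`), one has
`(q_l*)²·f'(q_l*) + 2 q_l*·f(q_l*)
   ≥ (2 q_l*·f(q_l*)²/S(q_l*))·(S(q_l*)/f(q_l*) − q_l*) ≥ 0`,
and hence (via the derivative formula for `q_u*(γ) = γ·q_l*(γ)`, whose
denominator is positive) the optimal upper price `q_u*` is non-decreasing
on `[1, ∞)`. -/
theorem gamma_ratio_upper_price_monotone
    (U : ℝ) (hU : 0 < U)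
    (f f' S : ℝ → ℝ)
    (hfderiv : ∀ v ∈ Ico 0 U, HasDerivAt f (f' v) v)
    (hfpos : ∀ v ∈ Ico 0 U, 0 < f v)
    (hSpos : ∀ v ∈ Ico 0 U, 0 < S v)
    (hw : StrictMonoOn (fun v => v - S v / f v) (Ico 0 U))
    (hwder : ∀ v ∈ Ico 0 U, 0 ≤ 2 * (f v) ^ 2 + S v * f' v)
    (ql : ℝ → ℝ)
    (hrange : ∀ γ ∈ Ici (1 : ℝ), 0 < ql γ ∧ γ * ql γ < U)
    (huniform : S (ql 1) = ql 1 * f (ql 1))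
    (hle : ∀ γ ∈ Ici (1 : ℝ), ql γ ≤ ql 1)
    (hdenom : ∀ γ ∈ Ici (1 : ℝ),
      0 < γ ^ 2 * f (γ * ql γ) + f (ql γ) + ql γ * f' (ql γ))
    (hderiv : ∀ γ ∈ Ici (1 : ℝ), HasDerivAt (fun t => t * ql t)
      (((ql γ) ^ 2 * f' (ql γ) + 2 * ql γ * f (ql γ)) /
        (γ ^ 2 * f (γ * ql γ) + f (ql γ) + ql γ * f' (ql γ))) γ) :
    (∀ γ ∈ Ici (1 : ℝ),
      (ql γ) ^ 2 * f' (ql γ) + 2 * ql γ * f (ql γ) ≥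
        2 * ql γ * (f (ql γ)) ^ 2 / S (ql γ) *
          (S (ql γ) / f (ql γ) - ql γ) ∧
      0 ≤ 2 * ql γ * (f (ql γ)) ^ 2 / S (ql γ) *
          (S (ql γ) / f (ql γ) - ql γ)) ∧
    MonotoneOn (fun γ => γ * ql γ) (Ici 1) := by
  have hmem : ∀ γ ∈ Ici (1 : ℝ), ql γ ∈ Ico 0 U := by
    intro γ hγ
    have h1 : (1:ℝ) ≤ γ := hγ
    obtain ⟨hq, hqU⟩ := hrange γ hγ
    have : ql γ ≤ γ * ql γ := le_mul_of_one_le_left hq.le h1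
    exact ⟨hq.le, lt_of_le_of_lt this hqU⟩
  have hmem1 : ql 1 ∈ Ico 0 U := hmem 1 (by norm_num)
  have key : ∀ γ ∈ Ici (1 : ℝ),
      (ql γ) ^ 2 * f' (ql γ) + 2 * ql γ * f (ql γ) ≥
        2 * ql γ * (f (ql γ)) ^ 2 / S (ql γ) *
          (S (ql γ) / f (ql γ) - ql γ) ∧
      0 ≤ 2 * ql γ * (f (ql γ)) ^ 2 / S (ql γ) *
          (S (ql γ) / f (ql γ) - ql γ) := by
    intro γ hγ
    have hm := hmem γ hγ
    have hq : 0 < ql γ := (hrange γ hγ).1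
    have hf : 0 < f (ql γ) := hfpos _ hm
    have hS : 0 < S (ql γ) := hSpos _ hm
    have hf1 : 0 < f (ql 1) := hfpos _ hmem1
    have hwd := hwder _ hm
    -- w(ql γ) ≤ w(ql 1) = 0
    have hwle : ql γ - S (ql γ) / f (ql γ) ≤ 0 := by
      have := hw.monotoneOn hm hmem1 (hle γ hγ)
      have h0 : ql 1 - S (ql 1) / f (ql 1) = 0 := by
        rw [huniform, mul_div_assoc, div_self hf1.ne', mul_one, sub_self]
      linarith
    have hnn : 0 ≤ S (ql γ) / f (ql γ) - ql γ := by linarith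
    constructor
    · have hkey : 0 ≤ f' (ql γ) + 2 * (f (ql γ)) ^ 2 / S (ql γ) := by
        rw [← sub_nonneg]
        have : f' (ql γ) + 2 * (f (ql γ)) ^ 2 / S (ql γ) - 0 =
            (2 * (f (ql γ)) ^ 2 + S (ql γ) * f' (ql γ)) / S (ql γ) := by
          field_simp; ring
        rw [this]
        exact div_nonneg hwd hS.le
      have hexp : 2 * ql γ * (f (ql γ)) ^ 2 / S (ql γ) *
          (S (ql γ) / f (ql γ) - ql γ) =
          2 * ql γ * f (ql γ) - 2 * (ql γ)^2 * (f (ql γ)) ^ 2 / S (ql γ) := by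
        field_simp
      rw [ge_iff_le, hexp]
      have hq2 : 0 ≤ (ql γ)^2 * (f' (ql γ) + 2 * (f (ql γ)) ^ 2 / S (ql γ)) :=
        mul_nonneg (sq_nonneg _) hkey
      have : (ql γ)^2 * (f' (ql γ) + 2 * (f (ql γ)) ^ 2 / S (ql γ)) =
          (ql γ)^2 * f' (ql γ) + 2 * (ql γ)^2 * (f (ql γ)) ^ 2 / S (ql γ) := by
        ring
      linarith [this ▸ hq2]
    · exact mul_nonneg (div_nonneg (by positivity) hS.le) hnn
  refine ⟨key, ?_⟩
  have hcont : ContinuousOn (fun γ => γ * ql γ) (Ici 1) := fun γ hγ =>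
    ((hderiv γ hγ).continuousAt).continuousWithinAt
  have hdiff : DifferentiableOn ℝ (fun γ => γ * ql γ) (interior (Ici 1)) := by
    intro γ hγ
    rw [interior_Ici] at hγ
    exact ((hderiv γ (mem_Ici.mpr (le_of_lt (mem_Ioi.mp hγ)))).differentiableAt).differentiableWithinAt
  refine monotoneOn_of_deriv_nonneg (convex_Ici 1) hcont hdiff ?_
  intro γ hγ
  rw [interior_Ici] at hγ
  have hγ' : γ ∈ Ici (1:ℝ) := mem_Ici.mpr (le_of_lt (mem_Ioi.mp hγ))
  rw [(hderiv γ hγ').deriv]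
  have ⟨h1, h2⟩ := key γ hγ'
  exact div_nonneg (le_trans h2 h1) (hdenom γ hγ').le
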